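/- arXiv:1806.07357 — 2 statements merged into one kernel-verified Lean document; each statement's English description precedes it below -/
import Mathlib

section
/- With f, F, g_m as above and r ≥ 1 a fixed integer, there is a constant D such that |Σ_{l₁=0}^{l−1} F(l₁/m)^{r−1} g_m(l₁) − F(l/m)^r / r| ≤ D/m uniformly in 0 ≤ l ≤ Mm for all m large. -/
open MeasureTheory

lemma riemann_est (M L : ℝ) (hL : 0 ≤ L) (h : ℝ → ℝ)
    (hcont : ContinuousOn h (Set.Icc 0 M))
    (hlip : ∀ x ∈ Set.Icc (0:ℝ) M, ∀ y ∈ Set.Icc (0:ℝ) M, |h x - h y| ≤ L * |x - y|)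
    (m : ℕ) (hm : 1 ≤ m) (l : ℕ) (hl : (l : ℝ) ≤ M * m) :
    |(∑ k ∈ Finset.range l, h (k / m) / m) - ∫ x in (0:ℝ)..((l:ℝ) / m), h x| ≤ L * M / m := by
  have hm0 : (0:ℝ) < m := by exact_mod_cast Nat.pos_of_ne_zero (by omega)
  set a : ℕ → ℝ := fun k => (k : ℝ) / m with ha
  have hstep : ∀ k : ℕ, a (k + 1) - a k = 1 / m := by
    intro k; simp only [ha]; push_cast; ring
  have hmono : ∀ k : ℕ, a k ≤ a (k + 1) := by
    intro k
    have : (0:ℝ) < 1 / m := by positivity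
    nlinarith [hstep k]
  have hsub : ∀ k : ℕ, k < l → Set.Icc (a k) (a (k + 1)) ⊆ Set.Icc (0:ℝ) M := by
    intro k hk
    apply Set.Icc_subset_Icc
    · positivity
    · have h1 : ((k:ℝ) + 1) ≤ (l:ℝ) := by exact_mod_cast hk
      have h2 : a (k+1) ≤ (l:ℝ)/m := by
        simp only [ha]; push_cast; gcongr
      refine h2.trans ?_
      rw [div_le_iff₀ hm0]; linarith
  have hint : ∀ k : ℕ, k < l → IntervalIntegrable h volume (a k) (a (k + 1)) := by
    intro k hk
    apply ContinuousOn.intervalIntegrable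
    apply hcont.mono
    rw [Set.uIcc_of_le (hmono k)]
    exact hsub k hk
  have hsplit : ∑ k ∈ Finset.range l, ∫ x in (a k)..(a (k+1)), h x
      = ∫ x in (a 0)..(a l), h x :=
    intervalIntegral.sum_integral_adjacent_intervals hint
  have ha0 : a 0 = 0 := by simp [ha]
  have hterm : ∀ k : ℕ, k < l →
      |h (a k) / m - ∫ x in (a k)..(a (k+1)), h x| ≤ L / m ^ 2 := by
    intro k hk
    have hconst : h (a k) / m = ∫ _x in (a k)..(a (k+1)), h (a k) := by
      rw [intervalIntegral.integral_const, hstep k, smul_eq_mul]; ring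
    rw [hconst, ← intervalIntegral.integral_sub (intervalIntegrable_const) (hint k hk)]
    have hbnd : ∀ x ∈ Set.uIoc (a k) (a (k+1)), ‖h (a k) - h x‖ ≤ L / m := by
      intro x hx
      rw [Set.uIoc_of_le (hmono k)] at hx
      have hxIcc : x ∈ Set.Icc (0:ℝ) M := hsub k hk ⟨le_of_lt hx.1, hx.2⟩
      have hakIcc : a k ∈ Set.Icc (0:ℝ) M := hsub k hk ⟨le_refl _, hmono k⟩
      have := hlip (a k) hakIcc x hxIcc
      rw [Real.norm_eq_abs]
      refine this.trans ?_
      have h1m : (0:ℝ) < 1/m := by positivity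
      have habs : |a k - x| ≤ 1 / m := by
        rw [abs_le]
        exact ⟨by nlinarith [hx.2, hstep k], by nlinarith [hx.1]⟩
      calc L * |a k - x| ≤ L * (1/m) := by nlinarith
        _ = L / m := by ring
    have hnn := intervalIntegral.norm_integral_le_of_norm_le_const hbnd
    rw [Real.norm_eq_abs] at hnn
    calc |∫ x in (a k)..(a (k+1)), (h (a k) - h x)| ≤ L / m * |a (k + 1) - a k| := hnn
      _ = L / m ^ 2 := by
          rw [hstep k, abs_of_pos (by positivity : (0:ℝ) < 1/m)]; ring
  calc |(∑ k ∈ Finset.range l, h (a k) / m) - ∫ x in (0:ℝ)..((l:ℝ)/m), h x|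
      = |∑ k ∈ Finset.range l, (h (a k) / m - ∫ x in (a k)..(a (k+1)), h x)| := by
        rw [Finset.sum_sub_distrib, hsplit, ha0]
    _ ≤ ∑ k ∈ Finset.range l, |h (a k) / m - ∫ x in (a k)..(a (k+1)), h x| :=
        Finset.abs_sum_le_sum_abs _ _
    _ ≤ ∑ _k ∈ Finset.range l, L / m ^ 2 :=
        Finset.sum_le_sum (fun k hk => hterm k (Finset.mem_range.mp hk))
    _ = l * (L / m ^ 2) := by rw [Finset.sum_const, Finset.card_range]; ring
    _ ≤ L * M / m := by
        have h2 : (l:ℝ) * (L / m^2) = ((l:ℝ) * L) / m^2 := by ring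
        rw [h2, div_le_div_iff₀ (by positivity) hm0]
        have h3 : L * (l:ℝ) ≤ L * (M*m) := mul_le_mul_of_nonneg_left hl hL
        nlinarith [h3, hm0]

/-- Lemma 1, relation (3.5): with `g_m(l) = f(l/m) / ∑_{l' ≤ M m} f(l'/m)` the
normalized discretization of a `C¹` density `f` on `[0, M]` (with `f, f'` bounded
by `C`) and `F(y) = ∫_0^y f`, for each fixed integer `r ≥ 1` one has
`|∑_{l₁ < l} F(l₁/m)^{r-1} g_m(l₁) - F(l/m)^r / r| ≤ D / m`
uniformly in `0 ≤ l ≤ M m` for all `m` large. -/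
theorem weighted_sum_approximation
    (M C : ℝ) (hM : 0 < M) (f f' : ℝ → ℝ)
    (hderiv : ∀ z ∈ Set.Icc (0 : ℝ) M, HasDerivWithinAt f (f' z) (Set.Icc (0 : ℝ) M) z)
    (hf'cont : ContinuousOn f' (Set.Icc (0 : ℝ) M))
    (hfpos : ∀ z ∈ Set.Icc (0 : ℝ) M, 0 ≤ f z)
    (hfC : ∀ z ∈ Set.Icc (0 : ℝ) M, |f z| ≤ C)
    (hf'C : ∀ z ∈ Set.Icc (0 : ℝ) M, |f' z| ≤ C)
    (hdens : ∫ z in (0 : ℝ)..M, f z = 1)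
    (F : ℝ → ℝ) (hF : ∀ y, F y = ∫ z in (0 : ℝ)..y, f z)
    (g : ℕ → ℕ → ℝ)
    (hg : ∀ m l, g m l = f (l / m) / ∑ l' ∈ Finset.range (⌊M * m⌋₊ + 1), f (l' / m))
    (r : ℕ) (hr : 1 ≤ r) :
    ∃ D : ℝ, ∃ m₀ : ℕ, 1 ≤ m₀ ∧ ∀ m : ℕ, m₀ ≤ m → ∀ l : ℕ, (l : ℝ) ≤ M * m →
      |(∑ l₁ ∈ Finset.range l, F (l₁ / m) ^ (r - 1) * g m l₁) - F (l / m) ^ r / r| ≤ D / m := by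
  have hMnn : (0:ℝ) ≤ M := hM.le
  have hC : (0:ℝ) ≤ C := le_trans (abs_nonneg _) (hfC 0 ⟨le_refl _, hMnn⟩)
  have hfcont : ContinuousOn f (Set.Icc 0 M) := fun z hz => (hderiv z hz).continuousWithinAt
  -- f is C-Lipschitz on [0,M]
  have hflip : ∀ x ∈ Set.Icc (0:ℝ) M, ∀ y ∈ Set.Icc (0:ℝ) M, |f x - f y| ≤ C * |x - y| := by
    intro x hx y hy
    have := Convex.norm_image_sub_le_of_norm_hasDerivWithin_le hderiv
      (fun z hz => by rw [Real.norm_eq_abs]; exact hf'C z hz) (convex_Icc 0 M) hy hx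
    simpa [Real.norm_eq_abs] using this
  have hFeq : F = fun y => ∫ z in (0:ℝ)..y, f z := funext hF
  -- F has derivative f within [0,M]
  have hFderiv : ∀ x ∈ Set.Icc (0:ℝ) M, HasDerivWithinAt F (f x) (Set.Icc (0:ℝ) M) x := by
    intro x hx
    haveI : Fact (x ∈ Set.Icc (0:ℝ) M) := ⟨hx⟩
    rw [hFeq]
    have hsub : Set.uIcc (0:ℝ) x ⊆ Set.Icc 0 M := by
      rw [Set.uIcc_of_le hx.1]
      exact Set.Icc_subset_Icc le_rfl hx.2
    exact intervalIntegral.integral_hasDerivWithinAt_right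
      ((hfcont.mono hsub).intervalIntegrable)
      (hfcont.stronglyMeasurableAtFilter_nhdsWithin measurableSet_Icc x)
      (hfcont.continuousWithinAt hx)
  have hFcont : ContinuousOn F (Set.Icc (0:ℝ) M) :=
    fun x hx => (hFderiv x hx).continuousWithinAt
  have hF0 : F 0 = 0 := by rw [hF]; simp
  set B : ℝ := max 1 (C * M) with hBdef
  have hB1 : (1:ℝ) ≤ B := le_max_left _ _
  have hB0 : (0:ℝ) < B := lt_of_lt_of_le one_pos hB1
  have hFB : ∀ x ∈ Set.Icc (0:ℝ) M, |F x| ≤ B := by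
    intro x hx
    have h1 := Convex.norm_image_sub_le_of_norm_hasDerivWithin_le hFderiv
      (fun z hz => by rw [Real.norm_eq_abs]; exact hfC z hz) (convex_Icc 0 M)
      (⟨le_refl _, hMnn⟩ : (0:ℝ) ∈ Set.Icc (0:ℝ) M) hx
    rw [Real.norm_eq_abs, Real.norm_eq_abs, hF0, sub_zero, sub_zero] at h1
    have : C * |x| ≤ C * M := by
      rw [abs_of_nonneg hx.1]; exact mul_le_mul_of_nonneg_left hx.2 hC
    exact h1.trans (this.trans (le_max_right _ _))
  set h : ℝ → ℝ := fun x => F x ^ (r - 1) * f x with hhdef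
  have hhcont : ContinuousOn h (Set.Icc (0:ℝ) M) := (hFcont.pow _).mul hfcont
  have hBpow : ∀ k : ℕ, k ≤ r → B ^ k ≤ B ^ r := fun k hk => pow_le_pow_right₀ hB1 hk
  set Bh : ℝ := B ^ r * C with hBhdef
  have hBh0 : 0 ≤ Bh := by positivity
  have hhB : ∀ x ∈ Set.Icc (0:ℝ) M, |h x| ≤ Bh := by
    intro x hx
    rw [hhdef]
    simp only [abs_mul, abs_pow]
    have h1 : |F x| ^ (r-1) ≤ B ^ (r-1) :=
      pow_le_pow_left₀ (abs_nonneg _) (hFB x hx) _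
    calc |F x| ^ (r-1) * |f x| ≤ B ^ (r-1) * C :=
          mul_le_mul h1 (hfC x hx) (abs_nonneg _) (by positivity)
      _ ≤ B ^ r * C := mul_le_mul_of_nonneg_right (hBpow _ (Nat.sub_le r 1)) hC
  -- h is Lipschitz with constant Lh
  set Lh : ℝ := (r : ℝ) * B ^ r * C * C + B ^ r * C with hLhdef
  have hLh0 : 0 ≤ Lh := by positivity
  have hhlip : ∀ x ∈ Set.Icc (0:ℝ) M, ∀ y ∈ Set.Icc (0:ℝ) M, |h x - h y| ≤ Lh * |x - y| := by
    intro x hx y hy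
    have hd : ∀ z ∈ Set.Icc (0:ℝ) M, HasDerivWithinAt h
        ((((r-1 : ℕ):ℝ) * F z ^ (r-1-1) * f z) * f z + F z ^ (r-1) * f' z)
        (Set.Icc (0:ℝ) M) z :=
      fun z hz => (((hFderiv z hz).pow (r-1)).mul (hderiv z hz))
    have hbd : ∀ z ∈ Set.Icc (0:ℝ) M,
        ‖(((r-1 : ℕ):ℝ) * F z ^ (r-1-1) * f z) * f z + F z ^ (r-1) * f' z‖ ≤ Lh := by
      intro z hz
      rw [Real.norm_eq_abs]
      have hFz := hFB z hz
      have hfz := hfC z hz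
      have hfz' := hf'C z hz
      have e1 : |(((r-1 : ℕ):ℝ) * F z ^ (r-1-1) * f z) * f z| ≤ (r:ℝ) * B ^ r * C * C := by
        rw [abs_mul, abs_mul, abs_mul, abs_pow]
        have c1 : |((r-1 : ℕ):ℝ)| ≤ (r:ℝ) := by
          rw [abs_of_nonneg (by positivity)]
          exact_mod_cast Nat.sub_le r 1
        have c2 : |F z| ^ (r-1-1) ≤ B ^ r :=
          (pow_le_pow_left₀ (abs_nonneg _) hFz _).trans (hBpow _ (by omega))
        have : |((r-1 : ℕ):ℝ)| * |F z| ^ (r-1-1) * |f z| ≤ (r:ℝ) * B ^ r * C := by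
          apply mul_le_mul _ hfz (abs_nonneg _) (by positivity)
          exact mul_le_mul c1 c2 (by positivity) (by positivity)
        exact mul_le_mul this hfz (abs_nonneg _) (by positivity)
      have e2 : |F z ^ (r-1) * f' z| ≤ B ^ r * C := by
        rw [abs_mul, abs_pow]
        exact mul_le_mul ((pow_le_pow_left₀ (abs_nonneg _) hFz _).trans
          (hBpow _ (Nat.sub_le r 1))) hfz' (abs_nonneg _) (by positivity)
      calc |_ + _| ≤ _ + _ := abs_add_le _ _
        _ ≤ Lh := by rw [hLhdef]; exact add_le_add e1 e2
    have := Convex.norm_image_sub_le_of_norm_hasDerivWithin_le hd hbd (convex_Icc 0 M) hy hx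
    simpa [Real.norm_eq_abs] using this
  -- FTC: the integral of h equals F^r/r
  have hr0 : (r:ℝ) ≠ 0 := by positivity
  have hI : ∀ y : ℝ, 0 ≤ y → y ≤ M → (∫ x in (0:ℝ)..y, h x) = F y ^ r / r := by
    intro y hy hyM
    have hsub : Set.Icc (0:ℝ) y ⊆ Set.Icc 0 M := Set.Icc_subset_Icc le_rfl hyM
    have key : (∫ x in (0:ℝ)..y, h x) = F y ^ r / r - F 0 ^ r / r := by
      apply intervalIntegral.integral_eq_sub_of_hasDeriv_right_of_le hy
      · exact ((hFcont.mono hsub).pow r).div_const r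
      · intro x hx
        have hxM : x ∈ Set.Ioo (0:ℝ) M := ⟨hx.1, lt_of_lt_of_le hx.2 hyM⟩
        have hFd : HasDerivAt F (f x) x :=
          (hFderiv x ⟨hxM.1.le, hxM.2.le⟩).hasDerivAt (Icc_mem_nhds hxM.1 hxM.2)
        have hd := (hFd.pow r).div_const (r:ℝ)
        have heq : ((r:ℝ) * F x ^ (r-1) * f x) / (r:ℝ) = h x := by
          rw [hhdef]; field_simp
        rw [heq] at hd
        exact hd.hasDerivWithinAt
      · apply ContinuousOn.intervalIntegrable
        apply hhcont.mono
        rwa [Set.uIcc_of_le hy]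
    rw [key, hF0, zero_pow (by omega : r ≠ 0), zero_div, sub_zero]
  -- constants
  set c₁ : ℝ := C * M + 2 * C with hc₁def
  have hc₁0 : 0 ≤ c₁ := by positivity
  set D : ℝ := M * Bh * (2 * c₁) + Lh * M with hDdef
  refine ⟨D, max 1 (⌈2 * c₁⌉₊ + 1), le_max_left _ _, ?_⟩
  intro m hm l hl
  have hm1 : 1 ≤ m := le_trans (le_max_left _ _) hm
  have hm0 : (0:ℝ) < m := by exact_mod_cast Nat.pos_of_ne_zero (by omega)
  have h2c₁ : 2 * c₁ ≤ (m:ℝ) := by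
    have h1 : (⌈2 * c₁⌉₊ + 1 : ℕ) ≤ m := le_trans (le_max_right _ _) hm
    have h2 : 2 * c₁ ≤ (⌈2 * c₁⌉₊ : ℝ) := Nat.le_ceil _
    have h3 : ((⌈2 * c₁⌉₊ + 1 : ℕ) : ℝ) ≤ m := by exact_mod_cast h1
    push_cast at h3
    linarith
  have hlmM : (l:ℝ)/m ≤ M := by rw [div_le_iff₀ hm0]; linarith
  have hlm0 : (0:ℝ) ≤ (l:ℝ)/m := by positivity
  set N : ℕ := ⌊M * (m:ℝ)⌋₊ with hNdef
  have hNle : (N:ℝ) ≤ M * m := Nat.floor_le (by positivity)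
  have hNlt : M * (m:ℝ) < N + 1 := Nat.lt_floor_add_one _
  have hNmM : (N:ℝ)/m ≤ M := by rw [div_le_iff₀ hm0]; linarith
  have hNm0 : (0:ℝ) ≤ (N:ℝ)/m := by positivity
  set S : ℝ := ∑ l' ∈ Finset.range (N + 1), f (l' / m) with hSdef
  -- estimate on S
  have hRieN := riemann_est M C hC f hfcont hflip m hm1 N hNle
  have hfint : ∀ u v : ℝ, 0 ≤ u → u ≤ v → v ≤ M → IntervalIntegrable f volume u v := by
    intro u v hu huv hv
    apply ContinuousOn.intervalIntegrable
    apply hfcont.mono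
    rw [Set.uIcc_of_le huv]
    exact Set.Icc_subset_Icc hu hv
  have htail : |(∫ x in (0:ℝ)..((N:ℝ)/m), f x) - 1| ≤ C / m := by
    have hsub : (∫ x in (0:ℝ)..M, f x) - (∫ x in (0:ℝ)..((N:ℝ)/m), f x)
        = ∫ x in ((N:ℝ)/m)..M, f x :=
      intervalIntegral.integral_interval_sub_left (hfint 0 M le_rfl hMnn le_rfl)
        (hfint 0 ((N:ℝ)/m) le_rfl hNm0 hNmM)
    have hbnd : ∀ x ∈ Set.uIoc ((N:ℝ)/m) M, ‖f x‖ ≤ C := by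
      intro x hx
      rw [Set.uIoc_of_le hNmM] at hx
      exact (Real.norm_eq_abs _) ▸ hfC x ⟨le_trans hNm0 hx.1.le, hx.2⟩
    have h1 := intervalIntegral.norm_integral_le_of_norm_le_const hbnd
    rw [Real.norm_eq_abs] at h1
    have h2 : |M - (N:ℝ)/m| ≤ 1/m := by
      rw [abs_of_nonneg (by linarith [hNmM] : (0:ℝ) ≤ M - (N:ℝ)/m)]
      rw [sub_le_iff_le_add]
      rw [← add_div, le_div_iff₀ hm0]  -- M ≤ (N+1)/m
      linarith
    have h3 : |(∫ x in ((N:ℝ)/m)..M, f x)| ≤ C / m := by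
      refine h1.trans ?_
      calc C * |M - (N:ℝ)/m| ≤ C * (1/m) := mul_le_mul_of_nonneg_left h2 hC
        _ = C / m := by ring
    rw [hdens] at hsub
    calc |(∫ x in (0:ℝ)..((N:ℝ)/m), f x) - 1|
        = |(∫ x in ((N:ℝ)/m)..M, f x)| := by rw [← hsub, abs_sub_comm]
      _ ≤ C / m := h3
  have hcorner : |f ((N:ℝ)/m) / m| ≤ C / m := by
    rw [abs_div, abs_of_pos hm0]
    gcongr
    exact hfC _ ⟨hNm0, hNmM⟩
  have hsplitS : S / m = (∑ k ∈ Finset.range N, f (k / m) / m) + f ((N:ℝ)/m) / m := by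
    rw [hSdef, Finset.sum_range_succ, add_div, Finset.sum_div]
  have hSm : |S / m - 1| ≤ c₁ / m := by
    have key : S / m - 1 = ((∑ k ∈ Finset.range N, f (k / m) / m)
        - ∫ x in (0:ℝ)..((N:ℝ)/m), f x)
        + ((∫ x in (0:ℝ)..((N:ℝ)/m), f x) - 1) + f ((N:ℝ)/m) / m := by
      rw [hsplitS]; ring
    rw [key]
    calc |_ + _ + _| ≤ |_ + _| + |f ((N:ℝ)/m) / m| := abs_add_le _ _
      _ ≤ |(∑ k ∈ Finset.range N, f (k / m) / m) - ∫ x in (0:ℝ)..((N:ℝ)/m), f x|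
          + |(∫ x in (0:ℝ)..((N:ℝ)/m), f x) - 1| + |f ((N:ℝ)/m) / m| := by
            gcongr; exact abs_add_le _ _
      _ ≤ C * M / m + C / m + C / m := add_le_add (add_le_add hRieN htail) hcorner
      _ = c₁ / m := by rw [hc₁def]; ring
  have hSm' : |S - m| ≤ c₁ := by
    have key : S - m = (S / m - 1) * m := by field_simp
    rw [key, abs_mul, abs_of_pos hm0]
    calc |S/m - 1| * m ≤ (c₁/m) * m := mul_le_mul_of_nonneg_right hSm hm0.le
      _ = c₁ := by field_simp
  have hShalf : (m:ℝ)/2 ≤ S := by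
    have hle := abs_le.mp hSm'
    linarith [hle.1, h2c₁]
  have hS0 : (0:ℝ) < S := lt_of_lt_of_le (by positivity) hShalf
  -- rewrite the sum
  have hsum : (∑ l₁ ∈ Finset.range l, F (l₁/m) ^ (r-1) * g m l₁)
      = (∑ l₁ ∈ Finset.range l, h (l₁/m)) / S := by
    rw [Finset.sum_div]
    apply Finset.sum_congr rfl
    intro k _
    rw [hg m k, ← hNdef, ← hSdef, hhdef, mul_div_assoc]
  set R : ℝ := ∑ l₁ ∈ Finset.range l, h (l₁/m) / m with hRdef
  have hsumR : (∑ l₁ ∈ Finset.range l, h (l₁/m)) = R * m := by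
    rw [hRdef, ← Finset.sum_div]
    field_simp
  have hRbound : |R| ≤ M * Bh := by
    refine (Finset.abs_sum_le_sum_abs _ _).trans ?_
    have hterm : ∀ k ∈ Finset.range l, |h ((k:ℝ)/m) / m| ≤ Bh / m := by
      intro k hk
      rw [abs_div, abs_of_pos hm0]
      gcongr
      apply hhB
      refine ⟨by positivity, ?_⟩
      have hkl : (k:ℝ) ≤ l := by exact_mod_cast (Finset.mem_range.mp hk).le
      refine le_trans ?_ hlmM
      gcongr
    calc ∑ k ∈ Finset.range l, |h ((k:ℝ)/m) / m| ≤ ∑ _k ∈ Finset.range l, Bh / m :=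
          Finset.sum_le_sum hterm
      _ = l * (Bh / m) := by rw [Finset.sum_const, Finset.card_range]; ring
      _ = ((l:ℝ)/m) * Bh := by ring
      _ ≤ M * Bh := mul_le_mul_of_nonneg_right hlmM hBh0
  have hRie := riemann_est M Lh hLh0 h hhcont hhlip m hm1 l hl
  have hIl := hI ((l:ℝ)/m) hlm0 hlmM
  rw [hsum, hsumR]
  have hmain : R * m / S - F ((l:ℝ)/m) ^ r / r
      = R * ((m:ℝ)/S - 1) + (R - ∫ x in (0:ℝ)..((l:ℝ)/m), h x) := by
    rw [← hIl]
    field_simp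
    ring
  rw [hmain]
  have habsS : |(m:ℝ)/S - 1| ≤ 2 * c₁ / m := by
    have key : (m:ℝ)/S - 1 = ((m:ℝ) - S)/S := by field_simp
    rw [key, abs_div, abs_of_pos hS0, abs_sub_comm]
    calc |S - (m:ℝ)| / S ≤ c₁ / S := by gcongr
      _ ≤ c₁ / ((m:ℝ)/2) := by
          apply div_le_div_of_nonneg_left hc₁0 (by positivity) hShalf
      _ = 2 * c₁ / m := by field_simp
  have t1 : |R * ((m:ℝ)/S - 1)| ≤ M * Bh * (2 * c₁) / m := by
    rw [abs_mul]
    calc |R| * |(m:ℝ)/S - 1| ≤ (M * Bh) * (2 * c₁ / m) :=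
          mul_le_mul hRbound habsS (abs_nonneg _) (mul_nonneg hMnn hBh0)
      _ = M * Bh * (2 * c₁) / m := by ring
  calc |R * ((m:ℝ)/S - 1) + (R - ∫ x in (0:ℝ)..((l:ℝ)/m), h x)|
      ≤ |R * ((m:ℝ)/S - 1)| + |R - ∫ x in (0:ℝ)..((l:ℝ)/m), h x| := abs_add_le _ _
    _ ≤ M * Bh * (2 * c₁) / m + Lh * M / m := add_le_add t1 hRie
    _ = D / m := by rw [hDdef]; ring
end

section
/- Let X_1, X_2, ... be i.i.d. with continuous cdf F and classical records. For every n ≥ 1 and x ∈ ℝ, P(L(1) = n, X_n < x) = P(L(1) = n) · F(x)^n, where L(1) is the index of the first record after index 1 (i.e., the first n ≥ 2 with X_n > max_{j<n} X_j). -/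
open MeasureTheory ProbabilityTheory
open scoped ENNReal

open Set

namespace FirstRecordAux

variable {n : ℕ}




def Ties (n : ℕ) : Set (Fin n → ℝ) := ⋃ (i : Fin n) (j : Fin n) (_ : i ≠ j), {y | y i = y j}

def Mx (c : Fin n) : Set (Fin n → ℝ) := {y | ∀ i, i ≠ c → y i < y c}

def Dx (c d : Fin n) : Set (Fin n → ℝ) :=
  {y | (∀ i, i ≠ c → i ≠ d → y i < y c) ∧ ∀ i, i ≠ d → y i < y d}

def Tx (a b : Fin n) : Set (Fin n → ℝ) :=
  {y | (∀ i, i ≠ a → i ≠ b → y i ≤ y a) ∧ y a < y b}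

lemma measurableSet_Mx (c : Fin n) : MeasurableSet (Mx c) := by
  have : Mx c = ⋂ (i) (_ : i ≠ c), {y : Fin n → ℝ | y i < y c} := by
    ext y; simp [Mx]
  rw [this]
  exact MeasurableSet.iInter fun i => MeasurableSet.iInter fun _ =>
    measurableSet_lt (measurable_pi_apply i) (measurable_pi_apply c)

lemma measurableSet_Dx (c d : Fin n) : MeasurableSet (Dx c d) := by
  have : Dx c d = (⋂ (i) (_ : i ≠ c) (_ : i ≠ d), {y : Fin n → ℝ | y i < y c}) ∩
      ⋂ (i) (_ : i ≠ d), {y : Fin n → ℝ | y i < y d} := by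
    ext y; simp [Dx]
  rw [this]
  exact (MeasurableSet.iInter fun i => MeasurableSet.iInter fun _ => MeasurableSet.iInter fun _ =>
    measurableSet_lt (measurable_pi_apply i) (measurable_pi_apply c)).inter
    (MeasurableSet.iInter fun i => MeasurableSet.iInter fun _ =>
      measurableSet_lt (measurable_pi_apply i) (measurable_pi_apply d))

lemma measurableSet_Tx (a b : Fin n) : MeasurableSet (Tx a b) := by
  have : Tx a b = (⋂ (i) (_ : i ≠ a) (_ : i ≠ b), {y : Fin n → ℝ | y i ≤ y a}) ∩
      {y : Fin n → ℝ | y a < y b} := by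
    ext y; simp [Tx]
  rw [this]
  exact (MeasurableSet.iInter fun i => MeasurableSet.iInter fun _ => MeasurableSet.iInter fun _ =>
    measurableSet_le (measurable_pi_apply i) (measurable_pi_apply a)).inter
    (measurableSet_lt (measurable_pi_apply a) (measurable_pi_apply b))




lemma preim_Mx (e : Fin n ≃ Fin n) (c : Fin n) :
    (fun (y : Fin n → ℝ) (j : Fin n) => y (e.symm j)) ⁻¹' Mx (e c) = Mx c := by
  ext y
  simp only [Mx, mem_preimage, mem_setOf_eq]
  constructor
  · intro h i hi
    have := h (e i) (e.injective.ne hi)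
    simpa using this
  · intro h j hj
    have := h (e.symm j) (fun hc => hj (by rw [← e.apply_symm_apply j, hc]))
    simpa using this

lemma preim_Dx (e : Fin n ≃ Fin n) (c d : Fin n) :
    (fun (y : Fin n → ℝ) (j : Fin n) => y (e.symm j)) ⁻¹' Dx (e c) (e d) = Dx c d := by
  ext y
  simp only [Dx, mem_preimage, mem_setOf_eq]
  constructor
  · rintro ⟨h1, h2⟩
    constructor
    · intro i hic hid
      have := h1 (e i) (e.injective.ne hic) (e.injective.ne hid)
      simpa using this
    · intro i hid
      have := h2 (e i) (e.injective.ne hid)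
      simpa using this
  · rintro ⟨h1, h2⟩
    constructor
    · intro j hjc hjd
      have := h1 (e.symm j) (fun hc => hjc (by rw [← e.apply_symm_apply j, hc]))
        (fun hc => hjd (by rw [← e.apply_symm_apply j, hc]))
      simpa using this
    · intro j hjd
      have := h2 (e.symm j) (fun hc => hjd (by rw [← e.apply_symm_apply j, hc]))
      simpa using this

lemma preim_box (e : Fin n ≃ Fin n) (B : Set ℝ) :
    (fun (y : Fin n → ℝ) (j : Fin n) => y (e.symm j)) ⁻¹' (univ.pi fun _ => B)
      = univ.pi fun _ => B := by
  ext y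
  simp only [mem_preimage, mem_pi, mem_univ, forall_true_left, true_implies]
  constructor
  · intro h i; have := h (e i); simpa using this
  · intro h j; exact h _


lemma pi_perm (ρ : Measure ℝ) [IsFiniteMeasure ρ] (e : Fin n ≃ Fin n) (S : Set (Fin n → ℝ))
    (hS : MeasurableSet S) :
    Measure.pi (fun _ : Fin n => ρ) ((fun (y : Fin n → ℝ) (j : Fin n) => y (e.symm j)) ⁻¹' S)
      = Measure.pi (fun _ : Fin n => ρ) S := by
  have hmp := MeasureTheory.measurePreserving_piCongrLeft (fun _ : Fin n => ρ) e
  have hco : ⇑(MeasurableEquiv.piCongrLeft (fun _ : Fin n => ℝ) e)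
      = fun (y : Fin n → ℝ) (j : Fin n) => y (e.symm j) := by
    funext y j
    conv_lhs => rw [show j = e (e.symm j) from (e.apply_symm_apply j).symm]
    rw [MeasurableEquiv.coe_piCongrLeft]
    exact Equiv.piCongrLeft_apply_apply (fun _ => ℝ) e y (e.symm j)
  rw [← hco]
  exact hmp.measure_preimage hS.nullMeasurableSet

lemma core (hn : 2 ≤ n) (ρ : Measure ℝ) [IsFiniteMeasure ρ]
    (hties : ∀ i j : Fin n, i ≠ j → Measure.pi (fun _ : Fin n => ρ) {y | y i = y j} = 0)
    (a b : Fin n) (hab : a ≠ b) (B : Set ℝ) (hB : MeasurableSet B) :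
    ((n * (n - 1) : ℕ) : ℝ≥0∞) * Measure.pi (fun _ : Fin n => ρ)
        (Tx a b ∩ univ.pi fun _ => B) = ρ B ^ n := by
  have hne : Nonempty (Fin n) := ⟨a⟩
  set π := Measure.pi (fun _ : Fin n => ρ) with hπ
  set box : Set (Fin n → ℝ) := univ.pi fun _ => B with hboxdef
  have hboxm : MeasurableSet box := MeasurableSet.univ_pi fun _ => hB
  have hN : π (Ties n) = 0 := by
    refine measure_iUnion_null fun i => measure_iUnion_null fun j => measure_iUnion_null ?_
    exact fun hij => hties i j hij
  -- equal measures under relabeling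
  have hMeq : ∀ c d : Fin n, π (Mx c ∩ box) = π (Mx d ∩ box) := by
    intro c d
    set e := Equiv.swap c d with he
    have hpre : (fun (y : Fin n → ℝ) (j : Fin n) => y (e.symm j)) ⁻¹' (Mx (e c) ∩ box)
        = Mx c ∩ box := by rw [preimage_inter, preim_Mx, preim_box]
    have := pi_perm ρ e (Mx (e c) ∩ box) ((measurableSet_Mx _).inter hboxm)
    rw [hpre] at this
    rw [this, he, Equiv.swap_apply_left]
  have hDeq : ∀ c d c' d' : Fin n, c ≠ d → c' ≠ d' →
      π (Dx c d ∩ box) = π (Dx c' d' ∩ box) := by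
    intro c d c' d' hcd hcd'
    set e1 := Equiv.swap d d' with he1
    have h1 : e1 d = d' := Equiv.swap_apply_left d d'
    have h2 : e1 c ≠ d' := by rw [← h1]; exact e1.injective.ne hcd
    set e := e1.trans (Equiv.swap (e1 c) c') with he
    have hed : e d = d' := by
      rw [he, Equiv.trans_apply, h1, Equiv.swap_apply_of_ne_of_ne h2.symm (Ne.symm hcd')]
    have hec : e c = c' := by rw [he, Equiv.trans_apply]; exact Equiv.swap_apply_left _ _
    have hpre : (fun (y : Fin n → ℝ) (j : Fin n) => y (e.symm j)) ⁻¹' (Dx (e c) (e d) ∩ box)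
        = Dx c d ∩ box := by rw [preimage_inter, preim_Dx, preim_box]
    have := pi_perm ρ e (Dx (e c) (e d) ∩ box) ((measurableSet_Dx _ _).inter hboxm)
    rw [hpre] at this
    rw [this, hec, hed]
  -- generic decomposition
  have key : ∀ (f : Fin n → Set (Fin n → ℝ)) (W : Set (Fin n → ℝ)),
      (∀ c, MeasurableSet (f c)) → Pairwise (Function.onFun Disjoint f) →
      (⋃ c, f c) ⊆ W → W ⊆ (⋃ c, f c) ∪ Ties n →
      π W = ∑ c : Fin n, π (f c) := by
    intro f W hm hd hsub hcov
    have h1 : π W ≤ π (⋃ c, f c) := by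
      calc π W ≤ π ((⋃ c, f c) ∪ Ties n) := measure_mono hcov
      _ ≤ π (⋃ c, f c) + π (Ties n) := measure_union_le _ _
      _ = π (⋃ c, f c) := by rw [hN, add_zero]
    have h2 := le_antisymm h1 (measure_mono hsub)
    rw [h2, measure_iUnion hd hm, tsum_fintype]
  -- step A
  have stepA : π box = (n : ℝ≥0∞) * π (Mx b ∩ box) := by
    have hd : Pairwise (Function.onFun Disjoint fun c => Mx c ∩ box) := by
      intro c d hcd
      refine Set.disjoint_left.mpr fun y hy hy' => ?_
      exact absurd (hy'.1 c hcd) (not_lt.mpr (le_of_lt (hy.1 d (Ne.symm hcd))))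
    have hcov : box ⊆ (⋃ c, Mx c ∩ box) ∪ Ties n := by
      intro y hy
      obtain ⟨c, -, hc⟩ := Finset.exists_max_image (Finset.univ : Finset (Fin n)) y
        Finset.univ_nonempty
      by_cases hstrict : ∀ i, i ≠ c → y i < y c
      · exact Or.inl (mem_iUnion.mpr ⟨c, hstrict, hy⟩)
      · push_neg at hstrict
        obtain ⟨i, hic, hle⟩ := hstrict
        have heq : y i = y c := le_antisymm (hc i (Finset.mem_univ i)) hle
        refine Or.inr ?_
        simp only [Ties, mem_iUnion, mem_setOf_eq, exists_prop]
        exact ⟨i, c, hic, heq⟩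
    rw [key (fun c => Mx c ∩ box) box (fun c => (measurableSet_Mx c).inter hboxm) hd
      (iUnion_subset fun c => inter_subset_right) hcov]
    rw [Finset.sum_congr rfl (fun c _ => hMeq c b), Finset.sum_const, Finset.card_univ,
      Fintype.card_fin, nsmul_eq_mul]
  -- step B
  have stepB : π (Mx b ∩ box) = ((n - 1 : ℕ) : ℝ≥0∞) * π (Dx a b ∩ box) := by
    classical
    set g : Fin n → Set (Fin n → ℝ) := fun c => if c = b then ∅ else Dx c b ∩ box with hg
    have hgm : ∀ c, MeasurableSet (g c) := by
      intro c; rw [hg]; dsimp only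
      split
      · exact MeasurableSet.empty
      · exact (measurableSet_Dx _ _).inter hboxm
    have hd : Pairwise (Function.onFun Disjoint g) := by
      intro c d hcd
      unfold Function.onFun
      rw [hg]; dsimp only
      split
      · simp
      · split
        · simp
        · refine Set.disjoint_left.mpr fun y hy hy' => ?_
          rename_i hcb hdb
          have h1 : y d < y c := hy.1.1 d (Ne.symm hcd) hdb
          have h2 : y c < y d := hy'.1.1 c hcd hcb
          exact absurd h2 (not_lt.mpr h1.le)
    have hsub : (⋃ c, g c) ⊆ Mx b ∩ box := by
      refine iUnion_subset fun c => ?_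
      rw [hg]; dsimp only
      split
      · exact empty_subset _
      · exact fun y hy => ⟨hy.1.2, hy.2⟩
    have hcov : Mx b ∩ box ⊆ (⋃ c, g c) ∪ Ties n := by
      rintro y ⟨hy1, hy2⟩
      obtain ⟨c, hcm, hc⟩ := Finset.exists_max_image (Finset.univ.erase b) y
        ⟨a, Finset.mem_erase_of_ne_of_mem hab (Finset.mem_univ a)⟩
      have hcb : c ≠ b := Finset.ne_of_mem_erase hcm
      by_cases hstrict : ∀ i, i ≠ c → i ≠ b → y i < y c
      · refine Or.inl (mem_iUnion.mpr ⟨c, ?_⟩)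
        rw [hg]; dsimp only; rw [if_neg hcb]
        exact ⟨⟨hstrict, hy1⟩, hy2⟩
      · push_neg at hstrict
        obtain ⟨i, hic, hib, hle⟩ := hstrict
        have heq : y i = y c :=
          le_antisymm (hc i (Finset.mem_erase_of_ne_of_mem hib (Finset.mem_univ i))) hle
        refine Or.inr ?_
        simp only [Ties, mem_iUnion, mem_setOf_eq, exists_prop]
        exact ⟨i, c, hic, heq⟩
    rw [key g (Mx b ∩ box) hgm hd hsub hcov]
    rw [← Finset.sum_erase_add _ _ (Finset.mem_univ b)]
    have hgb : g b = ∅ := by simp [hg]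
    have h1 : ∀ c ∈ Finset.univ.erase b, π (g c) = π (Dx a b ∩ box) := by
      intro c hc
      have hcb := Finset.ne_of_mem_erase hc
      have hgc : g c = Dx c b ∩ box := by simp [hg, hcb]
      rw [hgc]
      exact hDeq c b a b hcb hab
    rw [hgb, measure_empty, add_zero, Finset.sum_congr rfl h1, Finset.sum_const,
      Finset.card_erase_of_mem (Finset.mem_univ b), Finset.card_univ,
      Fintype.card_fin, nsmul_eq_mul]
  -- step C
  have stepC : π (Tx a b ∩ box) = π (Dx a b ∩ box) := by
    refine le_antisymm ?_ (measure_mono fun y hy => ?_)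
    · have hcov : Tx a b ∩ box ⊆ (Dx a b ∩ box) ∪ Ties n := by
        rintro y ⟨⟨hT1, hT2⟩, hy2⟩
        by_cases hst : ∀ i, i ≠ a → i ≠ b → y i < y a
        · refine Or.inl ⟨⟨hst, fun i hib => ?_⟩, hy2⟩
          by_cases hia : i = a
          · rw [hia]; exact hT2
          · exact (hst i hia hib).trans hT2
        · push_neg at hst
          obtain ⟨i, hia, hib, hge⟩ := hst
          have heq : y i = y a := le_antisymm (hT1 i hia hib) hge
          refine Or.inr ?_
          simp only [Ties, mem_iUnion, mem_setOf_eq, exists_prop]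
          exact ⟨i, a, hia, heq⟩
      calc π (Tx a b ∩ box) ≤ π ((Dx a b ∩ box) ∪ Ties n) := measure_mono hcov
      _ ≤ π (Dx a b ∩ box) + π (Ties n) := measure_union_le _ _
      _ = π (Dx a b ∩ box) := by rw [hN, add_zero]
    · exact ⟨⟨fun i hia hib => (hy.1.1 i hia hib).le, hy.1.2 a hab⟩, hy.2⟩
  have hbig : π box = ρ B ^ n := by
    rw [hπ, hboxdef, Measure.pi_pi]
    simp
  calc ((n * (n - 1) : ℕ) : ℝ≥0∞) * π (Tx a b ∩ box)
      = (n : ℝ≥0∞) * (((n - 1 : ℕ) : ℝ≥0∞) * π (Dx a b ∩ box)) := by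
        rw [stepC]; push_cast; ring
  _ = (n : ℝ≥0∞) * π (Mx b ∩ box) := by rw [← stepB]
  _ = π box := by rw [← stepA]
  _ = ρ B ^ n := hbig

end FirstRecordAux


open FirstRecordAux

/-- First-record factorization for classical records: with
`A n = {X n > max_{1 ≤ j < n} X j}` and `{L(1) = n} = A n ∩ ⋂_{2 ≤ u < n} (A u)ᶜ`
the event that the first record after index 1 occurs at index `n ≥ 2`, one has
`P(L(1) = n, X n < x) = P(L(1) = n) · F(x) ^ n` for every `x`. -/
theorem first_record_time_value_factorization
    {Ω : Type*} [MeasurableSpace Ω] (μ : Measure Ω) [IsProbabilityMeasure μ]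
    (X : ℕ → Ω → ℝ) (hmeas : ∀ i, Measurable (X i))
    (hindep : iIndepFun X μ)
    (F : ℝ → ℝ) (hF : Continuous F) (hF0 : ∀ x, 0 ≤ F x)
    (hcdf : ∀ i x, μ {ω | X i ω < x} = ENNReal.ofReal (F x))
    (A : ℕ → Set Ω)
    (hA : ∀ n, A n = {ω | ∀ j, 1 ≤ j → j < n → X j ω < X n ω})
    (n : ℕ) (hn : 2 ≤ n) (x : ℝ) :
    μ ((A n ∩ ⋂ u ∈ Finset.Ico 2 n, (A u)ᶜ) ∩ {ω | X n ω < x})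
      = μ (A n ∩ ⋂ u ∈ Finset.Ico 2 n, (A u)ᶜ) * ENNReal.ofReal (F x ^ n) := by
  classical
  obtain ⟨m, rfl⟩ : ∃ m, n = m + 2 := ⟨n - 2, by omega⟩
  set ν := μ.map (X 1) with hν
  haveI hprob : IsProbabilityMeasure ν := Measure.isProbabilityMeasure_map (hmeas 1).aemeasurable
  have hIio : ∀ i x', μ.map (X i) (Iio x') = ENNReal.ofReal (F x') := by
    intro i x'
    rw [Measure.map_apply (hmeas i) measurableSet_Iio]
    exact hcdf i x'
  have hlaw : ∀ i, μ.map (X i) = ν := by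
    intro i
    haveI h1 : IsProbabilityMeasure (μ.map (X i)) :=
      Measure.isProbabilityMeasure_map (hmeas i).aemeasurable
    refine MeasureTheory.ext_of_generate_finite (range Iio) ?_ isPiSystem_Iio ?_ ?_
    · exact (BorelSpace.measurable_eq).trans (borel_eq_generateFrom_Iio ℝ)
    · rintro s ⟨x', rfl⟩
      rw [hIio i, hν, hIio 1]
    · simp [measure_univ]
  have hatom : ∀ r : ℝ, ν {r} = 0 := by
    intro r
    have hle : ∀ t, r < t → ν {r} ≤ ENNReal.ofReal (F t - F r) := by
      intro t ht
      have hsub : ({r} : Set ℝ) ⊆ Iio t \ Iio r := by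
        intro z hz
        rw [mem_singleton_iff] at hz
        subst hz
        exact ⟨ht, by simp⟩
      refine (measure_mono hsub).trans ?_
      rw [measure_diff (Iio_subset_Iio ht.le) measurableSet_Iio.nullMeasurableSet
        (measure_ne_top ν _), hν, hIio 1, hIio 1, ← ENNReal.ofReal_sub _ (hF0 r)]
    have htend : Filter.Tendsto (fun t => ENNReal.ofReal (F t - F r)) (nhdsWithin r (Ioi r))
        (nhds 0) := by
      have h0 : Filter.Tendsto (fun t => F t - F r) (nhdsWithin r (Ioi r)) (nhds 0) := by
        have := ((hF.tendsto r).mono_left (nhdsWithin_le_nhds (s := Ioi r))).sub_const (F r)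
        simpa using this
      have := (ENNReal.continuous_ofReal.tendsto 0).comp h0
      simpa [Function.comp_def] using this
    have hle0 : ν {r} ≤ 0 :=
      ge_of_tendsto htend (eventually_nhdsWithin_of_forall fun t ht => hle t ht)
    exact le_antisymm hle0 zero_le
  have hpair : ∀ p q : ℕ, p ≠ q → μ {ω | X p ω = X q ω} = 0 := by
    intro p q hpq
    have hind : IndepFun (X p) (X q) μ := hindep.indepFun hpq
    have hmap := (indepFun_iff_map_prod_eq_prod_map_map (hmeas p).aemeasurable
      (hmeas q).aemeasurable).mp hind
    have hdiag : MeasurableSet {z : ℝ × ℝ | z.1 = z.2} :=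
      measurableSet_eq_fun measurable_fst measurable_snd
    have hpre : {ω | X p ω = X q ω} = (fun ω => (X p ω, X q ω)) ⁻¹' {z : ℝ × ℝ | z.1 = z.2} := rfl
    rw [hpre, ← Measure.map_apply ((hmeas p).prodMk (hmeas q)) hdiag, hmap, hlaw p, hlaw q,
      Measure.prod_apply hdiag]
    have hz : ∀ r : ℝ, ν (Prod.mk r ⁻¹' {z : ℝ × ℝ | z.1 = z.2}) = 0 := by
      intro r
      have h1 : (Prod.mk r ⁻¹' {z : ℝ × ℝ | z.1 = z.2}) = {r} := by
        ext s; simp [eq_comm]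
      rw [h1]; exact hatom r
    simp [hz, hatom]
  -- the vector map
  set Φ : Ω → (Fin (m+2) → ℝ) := fun ω i => X ((i : ℕ) + 1) ω with hΦ
  have hΦm : Measurable Φ := measurable_pi_lambda _ fun i => hmeas _
  have hΦlaw : Measure.pi (fun _ : Fin (m+2) => ν) = μ.map Φ := by
    refine Measure.pi_eq fun s hs => ?_
    rw [Measure.map_apply hΦm (MeasurableSet.univ_pi hs)]
    set sets : ℕ → Set ℝ := fun j => if h : 1 ≤ j ∧ j ≤ m + 2 then s ⟨j - 1, by omega⟩ else univ
      with hsets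
    have hkey : ∀ i : Fin (m+2), sets ((i : ℕ) + 1) = s i := by
      intro i
      have hi : 1 ≤ (i:ℕ)+1 ∧ (i:ℕ)+1 ≤ m+2 := ⟨by omega, by have := i.isLt; omega⟩
      rw [hsets]; dsimp only; rw [dif_pos hi]
      congr 1
    have hsm : ∀ j, MeasurableSet (sets j) := by
      intro j; rw [hsets]; dsimp only
      split
      · exact hs _
      · exact MeasurableSet.univ
    set S : Finset ℕ := Finset.image (fun i : Fin (m+2) => (i : ℕ) + 1) Finset.univ with hS
    have hpre : Φ ⁻¹' (univ.pi s) = ⋂ j ∈ S, X j ⁻¹' sets j := by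
      ext ω
      simp only [mem_preimage, mem_pi, mem_univ, true_implies, mem_iInter, hS,
        Finset.mem_image, Finset.mem_univ, true_and, forall_exists_index, mem_setOf_eq]
      constructor
      · rintro h j i rfl
        rw [hkey i]
        exact h i
      · intro h i
        have := h ((i:ℕ)+1) i rfl
        rwa [hkey i] at this
    rw [hpre, hindep.measure_inter_preimage_eq_mul S (fun j _ => hsm j), hS,
      Finset.prod_image (by intro i _ j _ hij; exact Fin.ext (by simp only at hij; omega))]
    refine Finset.prod_congr rfl fun i _ => ?_
    rw [hkey i, ← hlaw ((i:ℕ)+1)]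
    exact (Measure.map_apply (hmeas _) (hs i)).symm
  have hties : ∀ i j : Fin (m+2), i ≠ j →
      Measure.pi (fun _ : Fin (m+2) => ν) {y | y i = y j} = 0 := by
    intro i j hij
    have hms : MeasurableSet {y : Fin (m+2) → ℝ | y i = y j} :=
      measurableSet_eq_fun (measurable_pi_apply i) (measurable_pi_apply j)
    rw [hΦlaw, Measure.map_apply hΦm hms]
    have h1 : Φ ⁻¹' {y | y i = y j} = {ω | X ((i:ℕ)+1) ω = X ((j:ℕ)+1) ω} := rfl
    rw [h1]
    exact hpair _ _ (fun hcon => hij (Fin.ext (by omega)))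
  -- event translation
  set a : Fin (m+2) := ⟨0, by omega⟩ with ha
  set b : Fin (m+2) := ⟨m+1, by omega⟩ with hb
  have hab : a ≠ b := by
    intro h
    rw [ha, hb, Fin.ext_iff] at h
    simp at h
  have hΦa : ∀ ω, Φ ω a = X 1 ω := fun ω => rfl
  have hΦb : ∀ ω, Φ ω b = X (m+2) ω := fun ω => rfl
  have hEpt : ∀ ω, (ω ∈ A (m+2) ∩ ⋂ u ∈ Finset.Ico 2 (m+2), (A u)ᶜ) ↔
      ((∀ u, 2 ≤ u → u < m+2 → X u ω ≤ X 1 ω) ∧ X 1 ω < X (m+2) ω) := by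
    intro ω
    constructor
    · rintro ⟨hAn, hno⟩
      rw [hA] at hAn
      simp only [mem_setOf_eq] at hAn
      have hno' : ∀ u, 2 ≤ u → u < m+2 → ∃ j, 1 ≤ j ∧ j < u ∧ X u ω ≤ X j ω := by
        intro u h2 hlt
        have hu := Set.mem_iInter₂.mp hno u (Finset.mem_Ico.mpr ⟨h2, hlt⟩)
        rw [hA] at hu
        simp only [mem_compl_iff, mem_setOf_eq] at hu
        push_neg at hu
        obtain ⟨j, hj1, hju, hle⟩ := hu
        exact ⟨j, hj1, hju, hle⟩
      refine ⟨?_, hAn 1 le_rfl (by omega)⟩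
      intro u
      induction u using Nat.strong_induction_on with
      | _ u ih =>
        intro h2 hlt
        obtain ⟨j, hj1, hju, hle⟩ := hno' u h2 hlt
        rcases eq_or_lt_of_le hj1 with h1 | h1
        · rw [← h1] at hle; exact hle
        · exact hle.trans (ih j hju h1 (by omega))
    · rintro ⟨hle, h1n⟩
      constructor
      · rw [hA]
        simp only [mem_setOf_eq]
        intro j hj1 hjn
        rcases eq_or_lt_of_le hj1 with h | h
        · rw [← h]; exact h1n
        · exact lt_of_le_of_lt (hle j h hjn) h1n
      · refine Set.mem_iInter₂.mpr fun u hu => ?_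
        rw [hA]
        simp only [mem_compl_iff, mem_setOf_eq]
        intro hcon
        obtain ⟨h2, hlt⟩ := Finset.mem_Ico.mp hu
        exact absurd (hcon 1 le_rfl (by omega)) (not_lt.mpr (hle u h2 hlt))
  have hTpt : ∀ ω, Φ ω ∈ Tx a b ↔
      ((∀ u, 2 ≤ u → u < m+2 → X u ω ≤ X 1 ω) ∧ X 1 ω < X (m+2) ω) := by
    intro ω
    constructor
    · rintro ⟨h1, h2⟩
      constructor
      · intro u h2u hu
        have hne1 : (⟨u - 1, by omega⟩ : Fin (m+2)) ≠ a := by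
          intro h
          rw [ha, Fin.ext_iff] at h
          simp at h
          omega
        have hne2 : (⟨u - 1, by omega⟩ : Fin (m+2)) ≠ b := by
          intro h
          rw [hb, Fin.ext_iff] at h
          simp at h
          omega
        have h3 := h1 ⟨u - 1, by omega⟩ hne1 hne2
        rw [hΦa ω] at h3
        have h4 : Φ ω ⟨u - 1, by omega⟩ = X u ω := by
          show X ((u - 1) + 1) ω = X u ω
          congr 1
          omega
        rwa [h4] at h3
      · rw [hΦa ω, hΦb ω] at h2
        exact h2
    · rintro ⟨h1, h2⟩
      constructor
      · intro i hia hib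
        have hiv1 : 1 ≤ (i:ℕ) := by
          rcases Nat.eq_zero_or_pos (i:ℕ) with h | h
          · exact absurd (by rw [ha]; exact Fin.ext (show (i:ℕ) = 0 by omega)) hia
          · exact h
        have hiv2 : (i:ℕ) < m+1 := by
          have hlt := i.isLt
          rcases Nat.lt_or_ge (i:ℕ) (m+1) with h | h
          · exact h
          · exact absurd (by rw [hb]; exact Fin.ext (show (i:ℕ) = m+1 by omega)) hib
        have h3 := h1 ((i:ℕ)+1) (by omega) (by omega)
        rw [hΦa ω]
        exact h3
      · rw [hΦa ω, hΦb ω]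
        exact h2
  have hboxes : MeasurableSet (Tx a b ∩ univ.pi fun _ : Fin (m+2) => Iio x) :=
    (measurableSet_Tx a b).inter (MeasurableSet.univ_pi fun _ => measurableSet_Iio)
  have hEeq : (A (m+2) ∩ ⋂ u ∈ Finset.Ico 2 (m+2), (A u)ᶜ) = Φ ⁻¹' (Tx a b) := by
    ext ω
    rw [mem_preimage, hTpt ω]
    exact hEpt ω
  have hExeq : ((A (m+2) ∩ ⋂ u ∈ Finset.Ico 2 (m+2), (A u)ᶜ) ∩ {ω | X (m+2) ω < x})
      = Φ ⁻¹' (Tx a b ∩ univ.pi fun _ => Iio x) := by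
    ext ω
    rw [mem_inter_iff, mem_preimage, mem_inter_iff]
    constructor
    · rintro ⟨hE, hx⟩
      have h := (hEpt ω).mp hE
      have hx' : X (m+2) ω < x := hx
      refine ⟨(hTpt ω).mpr h, Set.mem_univ_pi.mpr fun i => ?_⟩
      rw [mem_Iio]
      rcases Nat.lt_or_ge (i:ℕ) 1 with h0 | h0
      · have hΦi : Φ ω i = X 1 ω := by
          show X ((i:ℕ)+1) ω = X 1 ω
          congr 1
          omega
        rw [hΦi]
        exact h.2.trans hx'
      · rcases Nat.lt_or_ge (i:ℕ) (m+1) with h1 | h1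
        · have h3 := h.1 ((i:ℕ)+1) (by omega) (by omega)
          exact lt_of_le_of_lt h3 (h.2.trans hx')
        · have hΦi : Φ ω i = X (m+2) ω := by
            show X ((i:ℕ)+1) ω = X (m+2) ω
            congr 1
            have := i.isLt
            omega
          rw [hΦi]
          exact hx'
    · rintro ⟨hT, hbox⟩
      have h := (hTpt ω).mp hT
      refine ⟨(hEpt ω).mpr h, ?_⟩
      have hxb := hbox b (mem_univ b)
      rw [hΦb ω, mem_Iio] at hxb
      exact hxb
  have c2 := core (n := m+2) (by omega) ν hties a b hab (Iio x) measurableSet_Iio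
  have c1 := core (n := m+2) (by omega) ν hties a b hab univ MeasurableSet.univ
  have hTuniv : (univ.pi fun _ : Fin (m+2) => (univ : Set ℝ)) = univ := by
    simp
  rw [hTuniv, inter_univ, measure_univ, one_pow] at c1
  have hL : μ ((A (m+2) ∩ ⋂ u ∈ Finset.Ico 2 (m+2), (A u)ᶜ) ∩ {ω | X (m+2) ω < x})
      = Measure.pi (fun _ : Fin (m+2) => ν) (Tx a b ∩ univ.pi fun _ => Iio x) := by
    rw [hExeq, ← Measure.map_apply hΦm hboxes, ← hΦlaw]
  have hR : μ (A (m+2) ∩ ⋂ u ∈ Finset.Ico 2 (m+2), (A u)ᶜ)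
      = Measure.pi (fun _ : Fin (m+2) => ν) (Tx a b) := by
    rw [hEeq, ← Measure.map_apply hΦm (measurableSet_Tx a b), ← hΦlaw]
  rw [hL, hR, ENNReal.ofReal_pow (hF0 x)]
  have hνx : ν (Iio x) = ENNReal.ofReal (F x) := by rw [hν]; exact hIio 1 x
  have hk0 : (((m+2) * (m+2-1) : ℕ) : ℝ≥0∞) ≠ 0 :=
    Nat.cast_ne_zero.mpr (Nat.mul_ne_zero (by omega) (by omega))
  have hktop : (((m+2) * (m+2-1) : ℕ) : ℝ≥0∞) ≠ ⊤ := ENNReal.natCast_ne_top _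
  refine (ENNReal.mul_right_inj hk0 hktop).mp ?_
  calc (((m+2) * (m+2-1) : ℕ) : ℝ≥0∞)
        * Measure.pi (fun _ : Fin (m+2) => ν) (Tx a b ∩ univ.pi fun _ => Iio x)
      = ν (Iio x) ^ (m+2) := c2
  _ = ENNReal.ofReal (F x) ^ (m+2) := by rw [hνx]
  _ = ((((m+2) * (m+2-1) : ℕ) : ℝ≥0∞) * Measure.pi (fun _ : Fin (m+2) => ν) (Tx a b))
        * ENNReal.ofReal (F x) ^ (m+2) := by rw [c1, one_mul]
  _ = (((m+2) * (m+2-1) : ℕ) : ℝ≥0∞)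
        * (Measure.pi (fun _ : Fin (m+2) => ν) (Tx a b) * ENNReal.ofReal (F x) ^ (m+2)) :=
      mul_assoc _ _ _
end
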